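/- Let G and H be real Hilbert spaces and L, C : G → H bounded linear operators such that C is compact and L − λ̂C is invertible for some λ̂ ∈ ℝ; let Z : H → G denote the inverse of L − λ̂C. Let λ* ∈ ℝ, set T = L − λ*C, and assume Im T ∩ C(Ker T) = {0}. Then for every x ∈ G one has T(Z(Tx)) = 0 if and only if Tx = 0; equivalently, Ker((Z∘T)²) = Ker(Z∘T), i.e. the geometric and algebraic multiplicities of the eigenvalue λ* coincide. -/

import Mathlib

theorem geometric_eq_algebraic_multiplicity
    (G H : Type*) [NormedAddCommGroup G] [InnerProductSpace ℝ G] [CompleteSpace G]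
    [NormedAddCommGroup H] [InnerProductSpace ℝ H] [CompleteSpace H]
    (L C : G →L[ℝ] H)
    (hC : IsCompactOperator ⇑C)
    (lamHat : ℝ) (e : G ≃L[ℝ] H) (he : ∀ x, e x = L x - lamHat • C x)
    (lamStar : ℝ)
    (htrans : LinearMap.range (L - lamStar • C).toLinearMap ⊓
        Submodule.map C.toLinearMap (LinearMap.ker (L - lamStar • C).toLinearMap) = ⊥) :
    ∀ x : G, (L - lamStar • C) (e.symm ((L - lamStar • C) x)) = 0 ↔
      (L - lamStar • C) x = 0 := by
  have key : ∀ z : G, (L - lamStar • C) z = e z - (lamStar - lamHat) • C z := by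
    intro z
    rw [he z]
    simp only [ContinuousLinearMap.sub_apply, ContinuousLinearMap.smul_apply, sub_smul]
    abel
  intro x
  constructor
  · intro h
    set z := e.symm ((L - lamStar • C) x) with hzdef
    have hmem : (L - lamStar • C) x ∈ LinearMap.range (L - lamStar • C).toLinearMap ⊓
        Submodule.map C.toLinearMap (LinearMap.ker (L - lamStar • C).toLinearMap) := by
      refine ⟨⟨x, rfl⟩, ⟨(lamStar - lamHat) • z, ?_, ?_⟩⟩
      · exact Submodule.smul_mem _ _ (LinearMap.mem_ker.2 h)
      · have hk := key z
        rw [h] at hk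
        rw [hzdef, e.apply_symm_apply] at hk
        rw [map_smul]
        exact (sub_eq_zero.mp hk.symm).symm
    rw [htrans] at hmem
    exact Submodule.mem_bot _ |>.mp hmem
  · intro h
    rw [h]
    simp
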